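/- (Layer-agnostic bound, Corollary 6) Suppose a hypothesis h decomposes as h = f_i ∘ g_i for each i in a finite nonempty index set I, with f_i ∈ F_i, g_i ∈ G_i. Then R_T(h) ≤ R_S(h) + min_{i ∈ I} { d_{F_iΔF_i}(p_S^{g_i}, p_T^{g_i}) + d_{F_i,{G_iΔG_i}}(p_S, p_T) + λ_{F_i G_i}(g_i) }, where λ_{FG}(g) = inf_{f' ∈ F, g' ∈ G}[2R_S(f'g) + R_S(f'g') + R_T(f'g')]. -/

import Mathlib

open MeasureTheory

/-- Zero-one loss on binary labels. -/
noncomputable def zoLoss (a b : Bool) : ℝ := if a = b then 0 else 1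

/-- Expected disagreement between two binary hypotheses under a distribution on `X`. -/
noncomputable def riskD {X : Type*} [MeasurableSpace X] (μ : Measure X)
    (h h' : X → Bool) : ℝ := ∫ x, zoLoss (h x) (h' x) ∂μ

/-- Risk of a hypothesis against true labels, for a joint distribution on `X × Bool`. -/
noncomputable def riskJ {X : Type*} [MeasurableSpace X] (μ : Measure (X × Bool))
    (h : X → Bool) : ℝ := ∫ p, zoLoss (h p.1) p.2 ∂μ

/-- The `HΔH`-divergence between two distributions on `X`. -/
noncomputable def hDiv {X : Type*} [MeasurableSpace X] (μ ν : Measure X)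
    (H : Set (X → Bool)) : ℝ :=
  sSup {r | ∃ h ∈ H, ∃ h' ∈ H, r = |riskD μ h h' - riskD ν h h'|}

/-- The `F_{GΔG}`-divergence between two distributions on `X`. -/
noncomputable def fggDiv {X Z : Type*} [MeasurableSpace X] (μ ν : Measure X)
    (F : Set (Z → Bool)) (G : Set (X → Z)) : ℝ :=
  sSup {r | ∃ f ∈ F, ∃ g ∈ G, ∃ g' ∈ G,
    r = |riskD μ (f ∘ g) (f ∘ g') - riskD ν (f ∘ g) (f ∘ g')|}

lemma zo_nonneg (a b : Bool) : 0 ≤ zoLoss a b := by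
  unfold zoLoss; split <;> norm_num

lemma zo_le_one (a b : Bool) : zoLoss a b ≤ 1 := by
  unfold zoLoss; split <;> norm_num

lemma zo_symm (a b : Bool) : zoLoss a b = zoLoss b a := by
  cases a <;> cases b <;> simp [zoLoss]

lemma zo_tri (a b c : Bool) : zoLoss a c ≤ zoLoss a b + zoLoss b c := by
  cases a <;> cases b <;> cases c <;> simp [zoLoss]

lemma meas_zo {α : Type*} [MeasurableSpace α] {u v : α → Bool}
    (hu : Measurable u) (hv : Measurable v) :
    Measurable fun x => zoLoss (u x) (v x) :=
  (measurable_of_countable (fun p : Bool × Bool => zoLoss p.1 p.2)).comp (hu.prodMk hv)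

lemma intg_zo {α : Type*} [MeasurableSpace α] (μ : Measure α) [IsFiniteMeasure μ]
    {u v : α → Bool} (hu : Measurable u) (hv : Measurable v) :
    Integrable (fun x => zoLoss (u x) (v x)) μ := by
  refine (integrable_const (1:ℝ)).mono' (meas_zo hu hv).aestronglyMeasurable ?_
  filter_upwards with x
  rw [Real.norm_eq_abs, abs_of_nonneg (zo_nonneg _ _)]
  exact zo_le_one _ _

lemma riskD_nonneg {α : Type*} [MeasurableSpace α] (μ : Measure α) (u v : α → Bool) :
    0 ≤ riskD μ u v :=
  integral_nonneg fun x => zo_nonneg _ _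

lemma riskD_le_one {α : Type*} [MeasurableSpace α] (μ : Measure α) [IsProbabilityMeasure μ]
    {u v : α → Bool} (hu : Measurable u) (hv : Measurable v) :
    riskD μ u v ≤ 1 := by
  have := integral_mono (intg_zo μ hu hv) (integrable_const (1:ℝ))
    (fun x => zo_le_one (u x) (v x))
  simpa [riskD] using this

lemma riskD_tri {α : Type*} [MeasurableSpace α] (μ : Measure α) [IsFiniteMeasure μ]
    {u v w : α → Bool} (hu : Measurable u) (hv : Measurable v) (hw : Measurable w) :
    riskD μ u w ≤ riskD μ u v + riskD μ v w := by
  have h1 : riskD μ u w ≤ ∫ x, (zoLoss (u x) (v x) + zoLoss (v x) (w x)) ∂μ :=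
    integral_mono (intg_zo μ hu hw) ((intg_zo μ hu hv).add (intg_zo μ hv hw))
      (fun x => zo_tri _ _ _)
  rwa [integral_add (intg_zo μ hu hv) (intg_zo μ hv hw)] at h1

lemma riskD_map {α β : Type*} [MeasurableSpace α] [MeasurableSpace β]
    (μ : Measure α) {g : α → β} (hgm : Measurable g)
    {u v : β → Bool} (hu : Measurable u) (hv : Measurable v) :
    riskD (μ.map g) u v = riskD μ (u ∘ g) (v ∘ g) := by
  unfold riskD
  rw [integral_map hgm.aemeasurable (meas_zo hu hv).aestronglyMeasurable]
  rfl

lemma riskD_fst {α : Type*} [MeasurableSpace α] (μ : Measure (α × Bool))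
    {u v : α → Bool} (hu : Measurable u) (hv : Measurable v) :
    riskD (μ.map Prod.fst) u v = ∫ p, zoLoss (u p.1) (v p.1) ∂μ := by
  unfold riskD
  rw [integral_map measurable_fst.aemeasurable (meas_zo hu hv).aestronglyMeasurable]

lemma riskJ_tri {α : Type*} [MeasurableSpace α] (μ : Measure (α × Bool)) [IsFiniteMeasure μ]
    {u v : α → Bool} (hu : Measurable u) (hv : Measurable v) :
    riskJ μ u ≤ riskJ μ v + riskD (μ.map Prod.fst) u v := by
  have iu : Integrable (fun p : α × Bool => zoLoss (u p.1) p.2) μ :=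
    intg_zo μ (hu.comp measurable_fst) measurable_snd
  have iv : Integrable (fun p : α × Bool => zoLoss (v p.1) p.2) μ :=
    intg_zo μ (hv.comp measurable_fst) measurable_snd
  have iuv : Integrable (fun p : α × Bool => zoLoss (u p.1) (v p.1)) μ :=
    intg_zo μ (hu.comp measurable_fst) (hv.comp measurable_fst)
  have h1 : riskJ μ u ≤ ∫ p, (zoLoss (u p.1) (v p.1) + zoLoss (v p.1) p.2) ∂μ :=
    integral_mono iu (iuv.add iv) (fun p => zo_tri _ _ _)
  rw [integral_add iuv iv] at h1
  rw [riskD_fst μ hu hv]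
  unfold riskJ at h1 ⊢
  linarith

lemma riskD_le_riskJ_add {α : Type*} [MeasurableSpace α] (μ : Measure (α × Bool))
    [IsFiniteMeasure μ] {u v : α → Bool} (hu : Measurable u) (hv : Measurable v) :
    riskD (μ.map Prod.fst) u v ≤ riskJ μ u + riskJ μ v := by
  have iu : Integrable (fun p : α × Bool => zoLoss (u p.1) p.2) μ :=
    intg_zo μ (hu.comp measurable_fst) measurable_snd
  have iv : Integrable (fun p : α × Bool => zoLoss (v p.1) p.2) μ :=
    intg_zo μ (hv.comp measurable_fst) measurable_snd
  have iuv : Integrable (fun p : α × Bool => zoLoss (u p.1) (v p.1)) μ :=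
    intg_zo μ (hu.comp measurable_fst) (hv.comp measurable_fst)
  rw [riskD_fst μ hu hv]
  have h1 : ∫ p, zoLoss (u p.1) (v p.1) ∂μ
      ≤ ∫ p, (zoLoss (u p.1) p.2 + zoLoss (v p.1) p.2) ∂μ := by
    refine integral_mono iuv (iu.add iv) (fun p => ?_)
    calc zoLoss (u p.1) (v p.1) ≤ zoLoss (u p.1) p.2 + zoLoss p.2 (v p.1) := zo_tri _ _ _
      _ = zoLoss (u p.1) p.2 + zoLoss (v p.1) p.2 := by rw [zo_symm p.2]
  rw [integral_add iu iv] at h1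
  exact h1

theorem layer_agnostic_bound {X : Type*} [MeasurableSpace X] {ι : Type*}
    (I : Finset ι) (hI : I.Nonempty)
    (Z : ι → Type*) [∀ i, MeasurableSpace (Z i)]
    (pS pT : Measure (X × Bool)) [IsProbabilityMeasure pS] [IsProbabilityMeasure pT]
    (G : ∀ i, Set (X → Z i)) (F : ∀ i, Set (Z i → Bool))
    (hF : ∀ i, ∀ f ∈ F i, Measurable f) (hG : ∀ i, ∀ g ∈ G i, Measurable g)
    (h : X → Bool) (f : ∀ i, Z i → Bool) (g : ∀ i, X → Z i)
    (hf : ∀ i ∈ I, f i ∈ F i) (hg : ∀ i ∈ I, g i ∈ G i)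
    (hdecomp : ∀ i ∈ I, h = (f i) ∘ (g i)) :
    riskJ pT h ≤ riskJ pS h + I.inf' hI (fun i =>
      hDiv ((pS.map Prod.fst).map (g i)) ((pT.map Prod.fst).map (g i)) (F i)
      + fggDiv (pS.map Prod.fst) (pT.map Prod.fst) (F i) (G i)
      + sInf {r | ∃ f' ∈ F i, ∃ g' ∈ G i,
          r = 2 * riskJ pS (f' ∘ g i) + riskJ pS (f' ∘ g') + riskJ pT (f' ∘ g')}) := by
  haveI : IsProbabilityMeasure (pS.map Prod.fst) :=
    Measure.isProbabilityMeasure_map measurable_fst.aemeasurable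
  haveI : IsProbabilityMeasure (pT.map Prod.fst) :=
    Measure.isProbabilityMeasure_map measurable_fst.aemeasurable
  have key : ∀ i ∈ I, riskJ pT h - riskJ pS h ≤
      hDiv ((pS.map Prod.fst).map (g i)) ((pT.map Prod.fst).map (g i)) (F i)
      + fggDiv (pS.map Prod.fst) (pT.map Prod.fst) (F i) (G i)
      + sInf {r | ∃ f' ∈ F i, ∃ g' ∈ G i,
          r = 2 * riskJ pS (f' ∘ g i) + riskJ pS (f' ∘ g') + riskJ pT (f' ∘ g')} := by
    intro i hi
    have hgi : Measurable (g i) := hG i _ (hg i hi)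
    have hfi : Measurable (f i) := hF i _ (hf i hi)
    have hh : Measurable h := by rw [hdecomp i hi]; exact hfi.comp hgi
    haveI : IsProbabilityMeasure ((pS.map Prod.fst).map (g i)) :=
      Measure.isProbabilityMeasure_map hgi.aemeasurable
    haveI : IsProbabilityMeasure ((pT.map Prod.fst).map (g i)) :=
      Measure.isProbabilityMeasure_map hgi.aemeasurable
    set A := hDiv ((pS.map Prod.fst).map (g i)) ((pT.map Prod.fst).map (g i)) (F i) with hA
    set B := fggDiv (pS.map Prod.fst) (pT.map Prod.fst) (F i) (G i) with hB
    -- bounded above facts for the two sSup sets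
    have bddA : BddAbove {r | ∃ u ∈ F i, ∃ u' ∈ F i,
        r = |riskD ((pS.map Prod.fst).map (g i)) u u'
          - riskD ((pT.map Prod.fst).map (g i)) u u'|} := by
      refine ⟨1, fun r hr => ?_⟩
      obtain ⟨u, hu, u', hu', rfl⟩ := hr
      have h1 := riskD_le_one ((pS.map Prod.fst).map (g i)) (hF i _ hu) (hF i _ hu')
      have h2 := riskD_le_one ((pT.map Prod.fst).map (g i)) (hF i _ hu) (hF i _ hu')
      have h3 := riskD_nonneg ((pS.map Prod.fst).map (g i)) u u'
      have h4 := riskD_nonneg ((pT.map Prod.fst).map (g i)) u u'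
      rw [abs_sub_le_iff]; constructor <;> linarith
    have bddB : BddAbove {r | ∃ u ∈ F i, ∃ w ∈ G i, ∃ w' ∈ G i,
        r = |riskD (pS.map Prod.fst) (u ∘ w) (u ∘ w')
          - riskD (pT.map Prod.fst) (u ∘ w) (u ∘ w')|} := by
      refine ⟨1, fun r hr => ?_⟩
      obtain ⟨u, hu, w, hw, w', hw', rfl⟩ := hr
      have mu := hF i _ hu
      have h1 := riskD_le_one (pS.map Prod.fst)
        (mu.comp (hG i _ hw)) (mu.comp (hG i _ hw'))
      have h2 := riskD_le_one (pT.map Prod.fst)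
        (mu.comp (hG i _ hw)) (mu.comp (hG i _ hw'))
      have h3 := riskD_nonneg (pS.map Prod.fst) (u ∘ w) (u ∘ w')
      have h4 := riskD_nonneg (pT.map Prod.fst) (u ∘ w) (u ∘ w')
      rw [abs_sub_le_iff]; constructor <;> linarith
    -- the sInf set is nonempty, and we bound each of its elements
    have hne : {r | ∃ f' ∈ F i, ∃ g' ∈ G i,
        r = 2 * riskJ pS (f' ∘ g i) + riskJ pS (f' ∘ g') + riskJ pT (f' ∘ g')}.Nonempty :=
      ⟨_, f i, hf i hi, g i, hg i hi, rfl⟩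
    have hstep : riskJ pT h - riskJ pS h - A - B ≤ sInf {r | ∃ f' ∈ F i, ∃ g' ∈ G i,
        r = 2 * riskJ pS (f' ∘ g i) + riskJ pS (f' ∘ g') + riskJ pT (f' ∘ g')} := by
      refine le_csInf hne ?_
      rintro r ⟨f', hf', g', hg', rfl⟩
      have mf' : Measurable f' := hF i _ hf'
      have mg' : Measurable g' := hG i _ hg'
      -- step (a)
      have step1 : riskJ pT h ≤ riskJ pT (f' ∘ g')
          + riskD (pT.map Prod.fst) h (f' ∘ g') :=
        riskJ_tri pT hh (mf'.comp mg')
      -- step (b)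
      have step2 : riskD (pT.map Prod.fst) h (f' ∘ g')
          ≤ riskD (pT.map Prod.fst) h (f' ∘ g i)
            + riskD (pT.map Prod.fst) (f' ∘ g i) (f' ∘ g') :=
        riskD_tri _ hh (mf'.comp hgi) (mf'.comp mg')
      -- step (c): pull back to latent space, compare via A
      have eqT : riskD (pT.map Prod.fst) h (f' ∘ g i)
          = riskD ((pT.map Prod.fst).map (g i)) (f i) f' := by
        rw [riskD_map _ hgi hfi mf', hdecomp i hi]
      have eqS : riskD (pS.map Prod.fst) h (f' ∘ g i)
          = riskD ((pS.map Prod.fst).map (g i)) (f i) f' := by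
        rw [riskD_map _ hgi hfi mf', hdecomp i hi]
      have memA : |riskD ((pS.map Prod.fst).map (g i)) (f i) f'
          - riskD ((pT.map Prod.fst).map (g i)) (f i) f'| ≤ A := by
        exact le_csSup bddA ⟨f i, hf i hi, f', hf', rfl⟩
      have step3 : riskD (pT.map Prod.fst) h (f' ∘ g i)
          ≤ riskD (pS.map Prod.fst) h (f' ∘ g i) + A := by
        rw [eqT, eqS]
        have h5 : -(A) ≤ riskD ((pS.map Prod.fst).map (g i)) (f i) f'
            - riskD ((pT.map Prod.fst).map (g i)) (f i) f' := by
          have := neg_abs_le (riskD ((pS.map Prod.fst).map (g i)) (f i) f'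
            - riskD ((pT.map Prod.fst).map (g i)) (f i) f')
          linarith
        linarith
      have step4 : riskD (pS.map Prod.fst) h (f' ∘ g i)
          ≤ riskJ pS h + riskJ pS (f' ∘ g i) :=
        riskD_le_riskJ_add pS hh (mf'.comp hgi)
      -- step (d): compare source/target disagreement of f'∘g i and f'∘g' via B
      have memB : |riskD (pS.map Prod.fst) (f' ∘ g i) (f' ∘ g')
          - riskD (pT.map Prod.fst) (f' ∘ g i) (f' ∘ g')| ≤ B :=
        le_csSup bddB ⟨f', hf', g i, hg i hi, g', hg', rfl⟩
      have step5 : riskD (pT.map Prod.fst) (f' ∘ g i) (f' ∘ g')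
          ≤ riskD (pS.map Prod.fst) (f' ∘ g i) (f' ∘ g') + B := by
        have := neg_abs_le (riskD (pS.map Prod.fst) (f' ∘ g i) (f' ∘ g')
          - riskD (pT.map Prod.fst) (f' ∘ g i) (f' ∘ g'))
        linarith
      have step6 : riskD (pS.map Prod.fst) (f' ∘ g i) (f' ∘ g')
          ≤ riskJ pS (f' ∘ g i) + riskJ pS (f' ∘ g') :=
        riskD_le_riskJ_add pS (mf'.comp hgi) (mf'.comp mg')
      linarith
    linarith
  have := Finset.le_inf' hI (fun i =>
      hDiv ((pS.map Prod.fst).map (g i)) ((pT.map Prod.fst).map (g i)) (F i)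
      + fggDiv (pS.map Prod.fst) (pT.map Prod.fst) (F i) (G i)
      + sInf {r | ∃ f' ∈ F i, ∃ g' ∈ G i,
          r = 2 * riskJ pS (f' ∘ g i) + riskJ pS (f' ∘ g') + riskJ pT (f' ∘ g')}) key
  linarith
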